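/- arXiv:1704.02844 — 8 statements merged into one kernel-verified Lean document; each statement's English description precedes it below -/
import Mathlib

section
/- Let G = (V, E) be a finite simple graph with n vertices, let β > 1 be a real number, and let L be a natural number with β^L ≥ n. Then there exists a level function ℓ : V → {0, 1, …, L} such that, with the level-induced edge weights w(x,y) = β^{−max(ℓ(x), ℓ(y))}, the node weights satisfy: W_y < 1 for every node y, and W_y ≥ 1/β for every node y with ℓ(y) > 0. -/
open Finset

variable {V : Type*}

/-- The weight of a node `v`: the sum of the weights of the edges incident on `v`. -/
noncomputable def nodeWeight [Fintype V] [DecidableEq V] (G : SimpleGraph V)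
    [DecidableRel G.Adj] (w : Sym2 V → ℝ) (v : V) : ℝ :=
  ∑ e ∈ G.edgeFinset, if v ∈ e then w e else 0

/-- The level-induced edge weights `w(x,y) = β ^ (-max(ℓ x, ℓ y))`. -/
noncomputable def levelWeight (β : ℝ) (ℓ : V → ℕ) : Sym2 V → ℝ :=
  Sym2.lift ⟨fun x y => β ^ (-(max (ℓ x) (ℓ y) : ℤ)), fun x y => by simp [max_comm]⟩

/-- A vertex cover: every edge has at least one endpoint in the set. -/
def IsVertexCover (G : SimpleGraph V) (C : Set V) : Prop :=
  ∀ ⦃u v : V⦄, G.Adj u v → u ∈ C ∨ v ∈ C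

section Aux

set_option linter.unusedSectionVars false

variable [Fintype V] [DecidableEq V]

lemma levelWeight_mk (β : ℝ) (ℓ : V → ℕ) (x y : V) :
    levelWeight β ℓ s(x, y) = β ^ (-((max (ℓ x) (ℓ y) : ℕ) : ℤ)) := by
  show β ^ (-(max (ℓ x : ℤ) (ℓ y : ℤ))) = _
  rw [← Nat.cast_max]

lemma nodeWeight_levelWeight_congr (G : SimpleGraph V) [DecidableRel G.Adj]
    (β : ℝ) {ℓ₁ ℓ₂ : V → ℕ} (v : V)
    (h : ∀ x, G.Adj v x → max (ℓ₁ v) (ℓ₁ x) = max (ℓ₂ v) (ℓ₂ x)) :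
    nodeWeight G (levelWeight β ℓ₁) v = nodeWeight G (levelWeight β ℓ₂) v := by
  unfold nodeWeight
  refine Finset.sum_congr rfl ?_
  intro e he
  induction e using Sym2.ind with
  | _ x y =>
    by_cases hv : v ∈ s(x, y)
    · simp only [hv, if_true]
      rw [SimpleGraph.mem_edgeFinset, SimpleGraph.mem_edgeSet] at he
      rw [levelWeight_mk, levelWeight_mk]
      rw [Sym2.mem_iff] at hv
      have hmax : max (ℓ₁ x) (ℓ₁ y) = max (ℓ₂ x) (ℓ₂ y) := by
        rcases hv with rfl | rfl
        · exact h y he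
        · rw [max_comm (ℓ₁ x), max_comm (ℓ₂ x)]; exact h x he.symm
      rw [hmax]
    · simp [hv]

lemma nodeWeight_levelWeight_le (G : SimpleGraph V) [DecidableRel G.Adj]
    {β : ℝ} (hβ : 1 ≤ β) {ℓ₁ ℓ₂ : V → ℕ} (v : V)
    (h : ∀ x, G.Adj v x → max (ℓ₁ v) (ℓ₁ x) ≤ max (ℓ₂ v) (ℓ₂ x) + 1) :
    nodeWeight G (levelWeight β ℓ₂) v ≤ β * nodeWeight G (levelWeight β ℓ₁) v := by
  have hβ0 : (0:ℝ) < β := lt_of_lt_of_le one_pos hβ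
  unfold nodeWeight
  rw [Finset.mul_sum]
  refine Finset.sum_le_sum ?_
  intro e he
  induction e using Sym2.ind with
  | _ x y =>
    by_cases hv : v ∈ s(x, y)
    · simp only [hv, if_true]
      rw [SimpleGraph.mem_edgeFinset, SimpleGraph.mem_edgeSet] at he
      rw [Sym2.mem_iff] at hv
      have hmax : max (ℓ₁ x) (ℓ₁ y) ≤ max (ℓ₂ x) (ℓ₂ y) + 1 := by
        rcases hv with rfl | rfl
        · exact h y he
        · have := h x he.symm
          rw [max_comm (ℓ₁ x), max_comm (ℓ₂ x)]
          exact this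
      rw [levelWeight_mk, levelWeight_mk]
      calc β ^ (-((max (ℓ₂ x) (ℓ₂ y) : ℕ) : ℤ))
          ≤ β ^ ((1:ℤ) - ((max (ℓ₁ x) (ℓ₁ y) : ℕ) : ℤ)) := by
            apply zpow_le_zpow_right₀ hβ
            omega
        _ = β * β ^ (-((max (ℓ₁ x) (ℓ₁ y) : ℕ) : ℤ)) := by
            rw [sub_eq_add_neg, zpow_add₀ (ne_of_gt hβ0), zpow_one]
    · simp [hv]

variable (G : SimpleGraph V) [DecidableRel G.Adj] (β : ℝ) (L : ℕ)

open Classical in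
/-- The level assignment after `k` rounds: unsettled vertices sit at level `L - k`,
and an unsettled vertex with weight `< 1/β` drops one level each round. -/
noncomputable def gLev : ℕ → V → ℕ
  | 0 => fun _ => L
  | (k+1) => fun v =>
      if gLev k v = L - k ∧ nodeWeight G (levelWeight β (gLev k)) v < 1/β
      then L - (k+1) else gLev k v

lemma gLev_ge : ∀ k v, L - k ≤ gLev G β L k v := by
  intro k
  induction k with
  | zero => intro v; simp [gLev]
  | succ k ih =>
    intro v
    simp only [gLev]
    split
    · omega
    · have := ih v; omega

lemma gLev_succ_le (k : ℕ) (v : V) : gLev G β L (k+1) v ≤ gLev G β L k v := by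
  simp only [gLev]
  split
  · have := gLev_ge G β L k v; omega
  · exact le_refl _

lemma gLev_le (k : ℕ) (v : V) : gLev G β L k v ≤ L := by
  induction k with
  | zero => simp [gLev]
  | succ k ih => exact le_trans (gLev_succ_le G β L k v) ih

lemma gLev_mono {k m : ℕ} (h : k ≤ m) (v : V) : gLev G β L m v ≤ gLev G β L k v := by
  obtain ⟨d, rfl⟩ := Nat.exists_eq_add_of_le h
  induction d with
  | zero => exact le_refl _
  | succ d ih => exact le_trans (gLev_succ_le G β L (k + d) v) (ih (by omega))

lemma gLev_stable {k : ℕ} {v : V} (h : L - k < gLev G β L k v) :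
    ∀ m, k ≤ m → gLev G β L m v = gLev G β L k v := by
  intro m hm
  obtain ⟨d, rfl⟩ := Nat.exists_eq_add_of_le hm
  induction d with
  | zero => rfl
  | succ d ih =>
    show gLev G β L ((k + d) + 1) v = _
    simp only [gLev]
    split
    · rename_i hc
      exfalso
      have h1 := hc.1
      rw [ih (by omega)] at h1
      omega
    · exact ih (by omega)

lemma gLev_final_eq {k : ℕ} {v : V} (hk : k ≤ L) (h : L - k ≤ gLev G β L L v) :
    gLev G β L L v = gLev G β L k v := by
  rcases eq_or_lt_of_le (gLev_ge G β L k v) with heq | hlt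
  · have := gLev_mono G β L hk v
    omega
  · exact gLev_stable G β L hlt L hk

lemma gLev_max_eq {k : ℕ} (hk : k ≤ L) {v : V}
    (h : L - k ≤ gLev G β L L v) (x : V) :
    max (gLev G β L L v) (gLev G β L L x) = max (gLev G β L k v) (gLev G β L k x) := by
  have hv := gLev_final_eq G β L hk h
  rcases eq_or_lt_of_le (gLev_ge G β L k x) with heq | hlt
  · have h1 : gLev G β L L x ≤ gLev G β L k x := gLev_mono G β L hk x
    have h2 := gLev_ge G β L k v
    omega
  · have hx := gLev_stable G β L hlt L hk
    rw [hv, hx]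

lemma gLev_pred_le (k : ℕ) (v : V) : gLev G β L k v ≤ gLev G β L (k+1) v + 1 := by
  simp only [gLev]
  split
  · rename_i hc
    have := hc.1
    omega
  · omega

lemma nodeWeight_gLev_zero_lt (hβ : 1 < β) (hL : (Fintype.card V : ℝ) ≤ β ^ L) (v : V) :
    nodeWeight G (levelWeight β (gLev G β L 0)) v < 1 := by
  have hβ0 : (0:ℝ) < β := lt_trans one_pos hβ
  have hpow : (0:ℝ) < β ^ (-(L:ℤ)) := zpow_pos hβ0 _
  have hval : ∀ e ∈ G.edgeFinset, (if v ∈ e then levelWeight β (gLev G β L 0) e else 0)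
      = (if v ∈ e then β ^ (-(L:ℤ)) else 0) := by
    intro e he
    induction e using Sym2.ind with
    | _ x y => simp [levelWeight_mk, gLev]
  unfold nodeWeight
  rw [Finset.sum_congr rfl hval, ← Finset.sum_filter, ← SimpleGraph.incidenceFinset_eq_filter,
    Finset.sum_const, nsmul_eq_mul, SimpleGraph.card_incidenceFinset_eq_degree]
  have hcard : G.degree v < Fintype.card V := G.degree_lt_card_verts v
  calc ((G.degree v : ℕ) : ℝ) * β ^ (-(L:ℤ))
      < (Fintype.card V : ℝ) * β ^ (-(L:ℤ)) := by
        apply mul_lt_mul_of_pos_right _ hpow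
        exact_mod_cast hcard
    _ ≤ β ^ L * β ^ (-(L:ℤ)) := mul_le_mul_of_nonneg_right hL (le_of_lt hpow)
    _ = 1 := by
        rw [← zpow_natCast β L, ← zpow_add₀ (ne_of_gt hβ0)]
        simp

lemma nodeWeight_gLev_lt (hβ : 1 < β) (hL : (Fintype.card V : ℝ) ≤ β ^ L) :
    ∀ k, k ≤ L → ∀ v, gLev G β L k v = L - k →
      nodeWeight G (levelWeight β (gLev G β L k)) v < 1 := by
  intro k
  induction k with
  | zero => intro _ v _; exact nodeWeight_gLev_zero_lt G β L hβ hL v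
  | succ k ih =>
    intro hkL v hv
    have hβ0 : (0:ℝ) < β := lt_trans one_pos hβ
    by_cases hc : gLev G β L k v = L - k ∧
        nodeWeight G (levelWeight β (gLev G β L k)) v < 1/β
    · have hle : nodeWeight G (levelWeight β (gLev G β L (k+1))) v
          ≤ β * nodeWeight G (levelWeight β (gLev G β L k)) v := by
        apply nodeWeight_levelWeight_le G (le_of_lt hβ)
        intro x _
        have h1 := gLev_pred_le G β L k v
        have h2 := gLev_pred_le G β L k x
        omega
      calc nodeWeight G (levelWeight β (gLev G β L (k+1))) v
          ≤ β * nodeWeight G (levelWeight β (gLev G β L k)) v := hle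
        _ < β * (1/β) := mul_lt_mul_of_pos_left hc.2 hβ0
        _ = 1 := by field_simp
    · exfalso
      have heq : gLev G β L (k+1) v = gLev G β L k v := by
        simp only [gLev]
        split
        · rename_i h'; exact absurd h' hc
        · rfl
      have hge := gLev_ge G β L k v
      omega

end Aux

theorem stmt0 [Fintype V] [DecidableEq V] (G : SimpleGraph V) [DecidableRel G.Adj]
    (β : ℝ) (hβ : 1 < β) (L : ℕ) (hL : (Fintype.card V : ℝ) ≤ β ^ L) :
    ∃ ℓ : V → ℕ, (∀ v : V, ℓ v ≤ L) ∧
      (∀ y : V, nodeWeight G (levelWeight β ℓ) y < 1) ∧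
      (∀ y : V, 0 < ℓ y → 1 / β ≤ nodeWeight G (levelWeight β ℓ) y) := by
  refine ⟨gLev G β L L, fun v => gLev_le G β L L v, ?_, ?_⟩
  · intro y
    set k := L - gLev G β L L y with hk
    have hyL : gLev G β L L y ≤ L := gLev_le G β L L y
    have hkL : k ≤ L := by omega
    have heq : gLev G β L L y = gLev G β L k y := gLev_final_eq G β L hkL (by omega)
    have hW : nodeWeight G (levelWeight β (gLev G β L L)) y
        = nodeWeight G (levelWeight β (gLev G β L k)) y := by
      apply nodeWeight_levelWeight_congr
      intro x _
      exact gLev_max_eq G β L hkL (by omega) x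
    rw [hW]
    exact nodeWeight_gLev_lt G β L hβ hL k hkL y (by omega)
  · intro y hy
    set k := L - gLev G β L L y with hk
    have hyL : gLev G β L L y ≤ L := gLev_le G β L L y
    have hkL : k < L := by omega
    have heqk : gLev G β L L y = gLev G β L k y := gLev_final_eq G β L (by omega) (by omega)
    have heqk1 : gLev G β L L y = gLev G β L (k+1) y :=
      gLev_final_eq G β L (by omega) (by omega)
    have hnot : ¬ (gLev G β L k y = L - k ∧
        nodeWeight G (levelWeight β (gLev G β L k)) y < 1/β) := by
      intro hc
      have hdrop : gLev G β L (k+1) y = L - (k+1) := by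
        simp only [gLev]
        split
        · rfl
        · rename_i h'; exact absurd hc h'
      omega
    have hW : nodeWeight G (levelWeight β (gLev G β L L)) y
        = nodeWeight G (levelWeight β (gLev G β L k)) y := by
      apply nodeWeight_levelWeight_congr
      intro x _
      exact gLev_max_eq G β L (by omega) (by omega) x
    rw [hW]
    by_contra hlt
    push_neg at hlt
    exact hnot ⟨by omega, hlt⟩
end

section
/- Let G = (V, E) be a finite simple graph, let α, β ≥ 1 be reals, let ℓ : V → ℕ be a level function, and let w be the level-induced edge weights w(x,y) = β^{−max(ℓ(x), ℓ(y))}. Suppose Property 1 holds: W_y < 1 for every node y, and W_y ≥ 1/(αβ) for every node y with ℓ(y) > 0. Then w is a fractional matching of G, and for every fractional matching w′ of G one has Σ_{e ∈ E} w′(e) ≤ 2αβ · Σ_{e ∈ E} w(e); that is, w is a 2αβ-approximate maximum fractional matching. -/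
open Finset

variable {V : Type*}

/-- A fractional matching: nonnegative edge weights with all node weights at most 1. -/
def IsFractionalMatching [Fintype V] [DecidableEq V] (G : SimpleGraph V)
    [DecidableRel G.Adj] (w : Sym2 V → ℝ) : Prop :=
  (∀ e ∈ G.edgeFinset, 0 ≤ w e) ∧ ∀ v, nodeWeight G w v ≤ 1

lemma sum_ite_sym2 [Fintype V] [DecidableEq V] {x y : V} (h : x ≠ y) (f : V → ℝ) :
    ∑ v : V, (if v ∈ s(x, y) then f v else 0) = f x + f y := by
  rw [← Finset.sum_filter]
  have hfil : univ.filter (· ∈ s(x, y)) = {x, y} := by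
    ext v; simp [Sym2.mem_iff]
  rw [hfil, Finset.sum_pair h]

theorem stmt1 [Fintype V] [DecidableEq V] (G : SimpleGraph V) [DecidableRel G.Adj]
    (α β : ℝ) (hα : 1 ≤ α) (hβ : 1 ≤ β) (ℓ : V → ℕ)
    (hlt : ∀ y : V, nodeWeight G (levelWeight β ℓ) y < 1)
    (hge : ∀ y : V, 0 < ℓ y → 1 / (α * β) ≤ nodeWeight G (levelWeight β ℓ) y) :
    IsFractionalMatching G (levelWeight β ℓ) ∧
      ∀ w' : Sym2 V → ℝ, IsFractionalMatching G w' →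
        ∑ e ∈ G.edgeFinset, w' e ≤ 2 * α * β * ∑ e ∈ G.edgeFinset, levelWeight β ℓ e := by
  have hβ0 : (0:ℝ) < β := lt_of_lt_of_le one_pos hβ
  have hαβ : (1:ℝ) ≤ α * β := one_le_mul_of_one_le_of_one_le hα hβ
  have hαβ0 : (0:ℝ) < α * β := lt_of_lt_of_le one_pos hαβ
  set w := levelWeight β ℓ with hwdef
  have hwpos : ∀ e : Sym2 V, 0 < w e := by
    intro e
    induction e using Sym2.ind with
    | _ x y =>
      have : w s(x, y) = β ^ (-(max (ℓ x) (ℓ y) : ℤ)) := rfl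
      rw [this]
      exact zpow_pos hβ0 _
  have hWnn : ∀ v, 0 ≤ nodeWeight G w v := by
    intro v
    refine Finset.sum_nonneg fun e _ => ?_
    split_ifs
    · exact (hwpos e).le
    · exact le_rfl
  refine ⟨⟨fun e _ => (hwpos e).le, fun v => (hlt v).le⟩, ?_⟩
  intro w' hw'
  -- key per-edge bound
  have hS : ∀ e ∈ G.edgeFinset,
      1 ≤ α * β * ∑ v : V, (if v ∈ e then nodeWeight G w v else 0) := by
    intro e
    induction e using Sym2.ind with
    | _ x y =>
      intro he
      have hadj : G.Adj x y := SimpleGraph.mem_edgeFinset.mp he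
      have hxy : x ≠ y := hadj.ne
      rw [sum_ite_sym2 hxy]
      have hxW : w s(x, y) ≤ nodeWeight G w x := by
        have := Finset.single_le_sum
          (f := fun e' => if x ∈ e' then w e' else 0)
          (fun e' _ => by split_ifs; exacts [(hwpos e').le, le_rfl]) he
        simpa [nodeWeight] using this
      rcases Nat.eq_zero_or_pos (ℓ x) with hx0 | hxpos
      · rcases Nat.eq_zero_or_pos (ℓ y) with hy0 | hypos
        · have hwe : w s(x, y) = 1 := by
            have : w s(x, y) = β ^ (-(max (ℓ x) (ℓ y) : ℤ)) := rfl
            rw [this, hx0, hy0]; simp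
          have h1 : (1:ℝ) ≤ nodeWeight G w x := hwe ▸ hxW
          nlinarith [hWnn y, hWnn x]
        · have := hge y hypos
          have h2 : 1 / (α * β) ≤ nodeWeight G w x + nodeWeight G w y := by
            have := hWnn x; linarith
          have := (div_le_iff₀ hαβ0).mp h2
          nlinarith
      · have := hge x hxpos
        have h2 : 1 / (α * β) ≤ nodeWeight G w x + nodeWeight G w y := by
          have := hWnn y; linarith
        have := (div_le_iff₀ hαβ0).mp h2
        nlinarith
  have step1 : ∑ e ∈ G.edgeFinset, w' e ≤
      α * β * ∑ e ∈ G.edgeFinset, w' e * ∑ v : V, (if v ∈ e then nodeWeight G w v else 0) := by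
    rw [Finset.mul_sum]
    refine Finset.sum_le_sum fun e he => ?_
    have h1 := hS e he
    have h2 := hw'.1 e he
    have := mul_le_mul_of_nonneg_left h1 h2
    nlinarith [this]
  have step2 : ∑ e ∈ G.edgeFinset, w' e * ∑ v : V, (if v ∈ e then nodeWeight G w v else 0)
      = ∑ v : V, nodeWeight G w v * nodeWeight G w' v := by
    have : ∀ e ∈ G.edgeFinset, w' e * ∑ v : V, (if v ∈ e then nodeWeight G w v else 0)
        = ∑ v : V, (if v ∈ e then nodeWeight G w v * w' e else 0) := by
      intro e _
      rw [Finset.mul_sum]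
      refine Finset.sum_congr rfl fun v _ => ?_
      split_ifs <;> ring
    rw [Finset.sum_congr rfl this, Finset.sum_comm]
    refine Finset.sum_congr rfl fun v _ => ?_
    rw [nodeWeight, nodeWeight, Finset.mul_sum]
    refine Finset.sum_congr rfl fun e _ => ?_
    rw [mul_ite, mul_zero]
  have step3 : ∑ v : V, nodeWeight G w v * nodeWeight G w' v ≤ ∑ v : V, nodeWeight G w v := by
    refine Finset.sum_le_sum fun v _ => ?_
    have := hw'.2 v
    nlinarith [hWnn v]
  have step4 : ∑ v : V, nodeWeight G w v = 2 * ∑ e ∈ G.edgeFinset, w e := by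
    unfold nodeWeight
    rw [Finset.sum_comm, Finset.mul_sum]
    refine Finset.sum_congr rfl fun e he => ?_
    induction e using Sym2.ind with
    | _ x y =>
      have hxy : x ≠ y := (SimpleGraph.mem_edgeFinset.mp he).ne
      rw [sum_ite_sym2 hxy (fun _ => w s(x, y))]
      ring
  calc ∑ e ∈ G.edgeFinset, w' e
      ≤ α * β * ∑ e ∈ G.edgeFinset, w' e * ∑ v : V, (if v ∈ e then nodeWeight G w v else 0) :=
        step1
    _ = α * β * ∑ v : V, nodeWeight G w v * nodeWeight G w' v := by rw [step2]
    _ ≤ α * β * ∑ v : V, nodeWeight G w v := by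
        have := mul_le_mul_of_nonneg_left step3 hαβ0.le
        linarith
    _ = 2 * α * β * ∑ e ∈ G.edgeFinset, w e := by rw [step4]; ring
end

section
/- Let G = (V, E) be a finite simple graph, let α, β ≥ 1 be reals, let ℓ : V → ℕ be a level function, and let w be the level-induced edge weights w(x,y) = β^{−max(ℓ(x), ℓ(y))}. Suppose Property 1 holds: W_y < 1 for every node y, and W_y ≥ 1/(αβ) for every node y with ℓ(y) > 0. Then for every vertex cover C′ of G, the set C = {v ∈ V : ℓ(v) > 0} satisfies |C| ≤ 2αβ · |C′|; that is, C is a 2αβ-approximate minimum vertex cover of G. -/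
open Finset

variable {V : Type*}

theorem stmt4 [Fintype V] [DecidableEq V] (G : SimpleGraph V) [DecidableRel G.Adj]
    (α β : ℝ) (hα : 1 ≤ α) (hβ : 1 ≤ β) (ℓ : V → ℕ)
    (hlt : ∀ y : V, nodeWeight G (levelWeight β ℓ) y < 1)
    (hge : ∀ y : V, 0 < ℓ y → 1 / (α * β) ≤ nodeWeight G (levelWeight β ℓ) y) :
    ∀ C' : Set V, IsVertexCover G C' →
      (({v : V | 0 < ℓ v} : Set V).ncard : ℝ) ≤ 2 * α * β * (C'.ncard : ℝ) := by
  classical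
  intro C' hC'
  set w := levelWeight β ℓ with hw
  have hβ0 : (0:ℝ) < β := lt_of_lt_of_le one_pos hβ
  have hα0 : (0:ℝ) < α := lt_of_lt_of_le one_pos hα
  have hαβ0 : (0:ℝ) < α * β := mul_pos hα0 hβ0
  have hw0 : ∀ e : Sym2 V, 0 ≤ w e := by
    intro e
    induction e using Sym2.ind with
    | _ x y =>
      show (0:ℝ) ≤ β ^ (-(max (ℓ x) (ℓ y) : ℤ))
      positivity
  have hW0 : ∀ v, 0 ≤ nodeWeight G w v := by
    intro v
    refine Finset.sum_nonneg fun e _ => ?_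
    split
    · exact hw0 e
    · exact le_refl 0
  set Cfin : Finset V := univ.filter (fun v => 0 < ℓ v) with hCfin
  set C'fin : Finset V := univ.filter (fun v => v ∈ C') with hC'fin
  have hCset : ({v : V | 0 < ℓ v} : Set V) = ↑Cfin := by
    ext v; simp [hCfin]
  have hC'set : C' = ↑C'fin := by
    ext v; simp [hC'fin]
  have hsum : ∀ s : Finset V, ∑ v ∈ s, nodeWeight G w v
      = ∑ e ∈ G.edgeFinset, ((s.filter (· ∈ e)).card : ℝ) * w e := by
    intro s
    unfold nodeWeight
    rw [Finset.sum_comm]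
    refine Finset.sum_congr rfl fun e _ => ?_
    rw [← Finset.sum_filter]
    simp [Finset.sum_const, nsmul_eq_mul]
  -- total weight over all vertices
  have hcard2 : ∀ e ∈ G.edgeFinset, ((univ.filter (· ∈ e)).card : ℝ) = 2 := by
    intro e he
    induction e using Sym2.ind with
    | _ a b =>
      rw [SimpleGraph.mem_edgeFinset, SimpleGraph.mem_edgeSet] at he
      have hne : a ≠ b := he.ne
      have hfil : univ.filter (· ∈ s(a,b)) = {a, b} := by
        ext v; simp [Sym2.mem_iff]
      rw [hfil, Finset.card_insert_of_notMem (by simp [hne]), Finset.card_singleton]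
      norm_num
  have h3 : ∑ v ∈ (univ : Finset V), nodeWeight G w v = 2 * ∑ e ∈ G.edgeFinset, w e := by
    rw [hsum, Finset.mul_sum]
    exact Finset.sum_congr rfl fun e he => by rw [hcard2 e he]
  -- each edge has ≥ 1 endpoint in C'
  have h4 : ∑ e ∈ G.edgeFinset, w e ≤ ∑ v ∈ C'fin, nodeWeight G w v := by
    rw [hsum]
    refine Finset.sum_le_sum fun e he => ?_
    have hcard1 : 1 ≤ (C'fin.filter (· ∈ e)).card := by
      clear hsum
      induction e using Sym2.ind with
      | _ a b =>
        rw [SimpleGraph.mem_edgeFinset, SimpleGraph.mem_edgeSet] at he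
        rcases hC' he with h | h
        · exact Finset.card_pos.mpr ⟨a, by simp [hC'fin, h]⟩
        · exact Finset.card_pos.mpr ⟨b, by simp [hC'fin, h]⟩
    calc w e = 1 * w e := (one_mul _).symm
      _ ≤ ((C'fin.filter (· ∈ e)).card : ℝ) * w e := by
          apply mul_le_mul_of_nonneg_right _ (hw0 e)
          exact_mod_cast hcard1
  have h5 : ∑ v ∈ C'fin, nodeWeight G w v ≤ (C'fin.card : ℝ) := by
    calc ∑ v ∈ C'fin, nodeWeight G w v ≤ ∑ v ∈ C'fin, (1:ℝ) :=
      Finset.sum_le_sum fun v _ => (hlt v).le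
      _ = (C'fin.card : ℝ) := by simp
  have h1 : (Cfin.card : ℝ) * (1/(α*β)) ≤ ∑ v ∈ Cfin, nodeWeight G w v := by
    rw [mul_comm]
    calc (1/(α*β)) * (Cfin.card : ℝ) = ∑ v ∈ Cfin, (1/(α*β)) := by
          simp [mul_comm]
      _ ≤ ∑ v ∈ Cfin, nodeWeight G w v := by
          refine Finset.sum_le_sum fun v hv => ?_
          exact hge v (by simpa [hCfin] using hv)
  have h2 : ∑ v ∈ Cfin, nodeWeight G w v ≤ ∑ v ∈ (univ : Finset V), nodeWeight G w v :=
    Finset.sum_le_sum_of_subset_of_nonneg (Finset.subset_univ _) fun v _ _ => hW0 v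
  have key : (Cfin.card : ℝ) * (1/(α*β)) ≤ 2 * (C'fin.card : ℝ) := by
    calc (Cfin.card : ℝ) * (1/(α*β)) ≤ ∑ v ∈ Cfin, nodeWeight G w v := h1
      _ ≤ ∑ v ∈ (univ : Finset V), nodeWeight G w v := h2
      _ = 2 * ∑ e ∈ G.edgeFinset, w e := h3
      _ ≤ 2 * ∑ v ∈ C'fin, nodeWeight G w v := by linarith [h4]
      _ ≤ 2 * (C'fin.card : ℝ) := by linarith [h5]
  rw [hCset, hC'set, Set.ncard_coe_finset, Set.ncard_coe_finset]
  rw [mul_one_div] at key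
  rw [div_le_iff₀ hαβ0] at key
  nlinarith [key]
end

section
/- Let G = (V, E) be a finite simple graph, β ≥ 5 a real, f(β) := 1 − 3/β, and K an integer. Let ℓ : V → ℤ satisfy ℓ(v) ≥ K for all v, let w : E → ℝ≥0 be edge weights with node weights W_v, let E^r := {(u,v) ∈ E : ℓ(u) = ℓ(v) = K}, and let w^r : E → ℝ≥0 be residual edge weights with w^r(e) = 0 for every e ∉ E^r, with residual node weights W^r_v. Assume: (i) W_v ≥ f(β) for every node v with ℓ(v) > K; and (b) every edge (u,v) ∈ E^r has an endpoint x ∈ {u,v} with W_x + W^r_x ≥ 1 − 1/β. Then V* := {v ∈ V : W_v + W^r_v ≥ f(β)} is a vertex cover of G. -/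
open Finset

variable {V : Type*}

theorem stmt5 [Fintype V] [DecidableEq V] (G : SimpleGraph V) [DecidableRel G.Adj]
    (β : ℝ) (hβ : 5 ≤ β) (K : ℤ) (ℓ : V → ℤ) (hK : ∀ v : V, K ≤ ℓ v)
    (w wr : Sym2 V → ℝ)
    (hw : ∀ e ∈ G.edgeFinset, 0 ≤ w e) (hwr : ∀ e ∈ G.edgeFinset, 0 ≤ wr e)
    -- the residual weights vanish outside E^r = {(u,v) ∈ E : ℓ u = K ∧ ℓ v = K}
    (hwr0 : ∀ u v : V, ¬ (G.Adj u v ∧ ℓ u = K ∧ ℓ v = K) → wr s(u, v) = 0)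
    -- (i) every node at level above K has weight at least f(β) = 1 - 3/β
    (hi : ∀ v : V, K < ℓ v → 1 - 3 / β ≤ nodeWeight G w v)
    -- (b) every edge of E^r has an endpoint x with W_x + W^r_x ≥ 1 - 1/β
    (hb : ∀ u v : V, G.Adj u v → ℓ u = K → ℓ v = K →
      1 - 1 / β ≤ nodeWeight G w u + nodeWeight G wr u ∨
      1 - 1 / β ≤ nodeWeight G w v + nodeWeight G wr v) :
    IsVertexCover G {v : V | 1 - 3 / β ≤ nodeWeight G w v + nodeWeight G wr v} := by
  have hβ0 : (0:ℝ) < β := by linarith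
  have hwrnn : ∀ x, 0 ≤ nodeWeight G wr x := fun x =>
    Finset.sum_nonneg fun e he => by
      by_cases h : x ∈ e
      · simpa [h] using hwr e he
      · simp [h]
  have h13 : (1:ℝ) - 1 / β ≥ 1 - 3 / β := by
    have : 1 / β ≤ 3 / β := by
      gcongr <;> norm_num
    linarith
  intro u v huv
  by_cases hu : K < ℓ u
  · left
    have := hi u hu
    have := hwrnn u
    simpa using by linarith
  by_cases hv : K < ℓ v
  · right
    have := hi v hv
    have := hwrnn v
    simpa using by linarith
  · have hu' : ℓ u = K := le_antisymm (not_lt.1 hu) (hK u)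
    have hv' : ℓ v = K := le_antisymm (not_lt.1 hv) (hK v)
    rcases hb u v huv hu' hv' with h | h
    · left; simpa using by linarith
    · right; simpa using by linarith
end

section
/- Let G = (V, E) be a finite simple graph, β ≥ 5 a real, f(β) := 1 − 3/β, and K an integer. Let ℓ : V → ℤ satisfy ℓ(v) ≥ K for all v, let w : E → ℝ≥0 be edge weights with node weights W_v, let E^r := {(u,v) ∈ E : ℓ(u) = ℓ(v) = K}, and let w^r : E → ℝ≥0 be residual edge weights with w^r(e) = 0 for every e ∉ E^r, with residual node weights W^r_v. Assume: (i) W_v ≥ f(β) for every node v with ℓ(v) > K; (a) W_v + W^r_v ≤ 1 for every node v; and (b) every edge (u,v) ∈ E^r has an endpoint x ∈ {u,v} with W_x + W^r_x ≥ 1 − 1/β. Then the edge weights e ↦ w(e) + w^r(e) form a fractional matching of G, and for every fractional matching w′ of G one has Σ_{e ∈ E} w′(e) ≤ (2/f(β)) · Σ_{e ∈ E} (w(e) + w^r(e)); that is, w + w^r is a (2/f(β))-approximate maximum fractional matching of G. -/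
open Finset

variable {V : Type*}

theorem stmt6 [Fintype V] [DecidableEq V] (G : SimpleGraph V) [DecidableRel G.Adj]
    (β : ℝ) (hβ : 5 ≤ β) (K : ℤ) (ℓ : V → ℤ) (hK : ∀ v : V, K ≤ ℓ v)
    (w wr : Sym2 V → ℝ)
    (hw : ∀ e ∈ G.edgeFinset, 0 ≤ w e) (hwr : ∀ e ∈ G.edgeFinset, 0 ≤ wr e)
    -- the residual weights vanish outside E^r = {(u,v) ∈ E : ℓ u = K ∧ ℓ v = K}
    (hwr0 : ∀ u v : V, ¬ (G.Adj u v ∧ ℓ u = K ∧ ℓ v = K) → wr s(u, v) = 0)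
    -- (i) every node at level above K has weight at least f(β) = 1 - 3/β
    (hi : ∀ v : V, K < ℓ v → 1 - 3 / β ≤ nodeWeight G w v)
    -- (a) W_v + W^r_v ≤ 1 for every node v
    (ha : ∀ v : V, nodeWeight G w v + nodeWeight G wr v ≤ 1)
    -- (b) every edge of E^r has an endpoint x with W_x + W^r_x ≥ 1 - 1/β
    (hb : ∀ u v : V, G.Adj u v → ℓ u = K → ℓ v = K →
      1 - 1 / β ≤ nodeWeight G w u + nodeWeight G wr u ∨
      1 - 1 / β ≤ nodeWeight G w v + nodeWeight G wr v) :
    IsFractionalMatching G (fun e => w e + wr e) ∧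
      ∀ w' : Sym2 V → ℝ, IsFractionalMatching G w' →
        ∑ e ∈ G.edgeFinset, w' e ≤
          (2 / (1 - 3 / β)) * ∑ e ∈ G.edgeFinset, (w e + wr e) := by
  classical
  have hβ0 : (0:ℝ) < β := by linarith
  have hf : (0:ℝ) < 1 - 3/β := by
    have h1 : 3/β ≤ 3/5 := by
      apply div_le_div_of_nonneg_left (by norm_num) (by norm_num) hβ
    linarith
  have nwnn : ∀ (u : Sym2 V → ℝ), (∀ e ∈ G.edgeFinset, 0 ≤ u e) →
      ∀ v, 0 ≤ nodeWeight G u v := by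
    intro u hu v
    apply Finset.sum_nonneg
    intro e he
    split
    · exact hu e he
    · exact le_refl 0
  have nwadd : ∀ v, nodeWeight G (fun e => w e + wr e) v
      = nodeWeight G w v + nodeWeight G wr v := by
    intro v
    unfold nodeWeight
    rw [← Finset.sum_add_distrib]
    apply Finset.sum_congr rfl
    intro e _
    split <;> simp
  refine ⟨⟨fun e he => add_nonneg (hw e he) (hwr e he), fun v => by rw [nwadd]; exact ha v⟩, ?_⟩
  intro w' hw'
  set C : Finset V := Finset.univ.filter
    (fun v => 1 - 3/β ≤ nodeWeight G w v + nodeWeight G wr v) with hC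
  have hmemC : ∀ v : V, v ∈ C ↔ 1 - 3/β ≤ nodeWeight G w v + nodeWeight G wr v := by
    intro v; simp [hC]
  have hcover : ∀ u v : V, G.Adj u v → u ∈ C ∨ v ∈ C := by
    intro u v huv
    rcases eq_or_lt_of_le (hK u) with hu | hu
    · rcases eq_or_lt_of_le (hK v) with hv | hv
      · rcases hb u v huv hu.symm hv.symm with h | h
        · left; rw [hmemC]
          have h13 : (1:ℝ)/β ≤ 3/β := (div_le_div_iff_of_pos_right hβ0).mpr (by norm_num)
          linarith
        · right; rw [hmemC]
          have h13 : (1:ℝ)/β ≤ 3/β := (div_le_div_iff_of_pos_right hβ0).mpr (by norm_num)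
          linarith
      · right; rw [hmemC]
        have := hi v hv
        have h2 := nwnn wr hwr v
        linarith
    · left; rw [hmemC]
      have := hi u hu
      have h2 := nwnn wr hwr u
      linarith
  -- generic formula for sum of node weights over C
  have hsum : ∀ (u : Sym2 V → ℝ), ∑ v ∈ C, nodeWeight G u v
      = ∑ e ∈ G.edgeFinset, ((C.filter (fun v => v ∈ e)).card : ℝ) * u e := by
    intro u
    unfold nodeWeight
    rw [Finset.sum_comm]
    apply Finset.sum_congr rfl
    intro e _
    rw [← Finset.sum_filter, Finset.sum_const, nsmul_eq_mul]
  have hcard2 : ∀ e ∈ G.edgeFinset, (C.filter (fun v => v ∈ e)).card ≤ 2 := by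
    intro e he
    induction e using Sym2.ind with
    | _ u v =>
      have hsub : C.filter (fun x => x ∈ s(u,v)) ⊆ {u, v} := by
        intro x hx
        simp only [Finset.mem_filter, Sym2.mem_iff] at hx
        simp [hx.2]
      calc (C.filter (fun x => x ∈ s(u,v))).card ≤ ({u, v} : Finset V).card :=
            Finset.card_le_card hsub
        _ ≤ 2 := Finset.card_insert_le _ _ |>.trans (by simp)
  have hcard1 : ∀ e ∈ G.edgeFinset, 1 ≤ (C.filter (fun v => v ∈ e)).card := by
    intro e he
    induction e using Sym2.ind with
    | _ u v =>
      have hadj : G.Adj u v := by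
        rw [SimpleGraph.mem_edgeFinset, SimpleGraph.mem_edgeSet] at he
        exact he
      rcases hcover u v hadj with h | h
      · exact Finset.card_pos.mpr ⟨u, by simp [Finset.mem_filter, h]⟩
      · exact Finset.card_pos.mpr ⟨v, by simp [Finset.mem_filter, h]⟩
  -- (1) ∑ w' ≤ ∑_{v ∈ C} nodeWeight w' v
  have step1 : ∑ e ∈ G.edgeFinset, w' e ≤ ∑ v ∈ C, nodeWeight G w' v := by
    rw [hsum]
    apply Finset.sum_le_sum
    intro e he
    have h1 := hcard1 e he
    have := hw'.1 e he
    have h1' : (1:ℝ) ≤ ((C.filter (fun v => v ∈ e)).card : ℝ) := by exact_mod_cast h1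
    nlinarith
  -- (2) ∑_{v∈C} nodeWeight w' v ≤ |C|
  have step2 : ∑ v ∈ C, nodeWeight G w' v ≤ (C.card : ℝ) := by
    calc ∑ v ∈ C, nodeWeight G w' v ≤ ∑ _v ∈ C, (1:ℝ) :=
          Finset.sum_le_sum (fun v _ => hw'.2 v)
      _ = (C.card : ℝ) := by simp
  -- (3) f * |C| ≤ ∑_{v∈C} (W_v + Wr_v)
  have step3 : (1 - 3/β) * (C.card : ℝ)
      ≤ ∑ v ∈ C, (nodeWeight G w v + nodeWeight G wr v) := by
    calc (1 - 3/β) * (C.card : ℝ) = ∑ _v ∈ C, (1 - 3/β) := by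
          rw [Finset.sum_const, nsmul_eq_mul, mul_comm]
      _ ≤ _ := Finset.sum_le_sum (fun v hv => (hmemC v).mp hv)
  -- (4) ∑_{v∈C} (W_v + Wr_v) ≤ 2 * ∑ (w + wr)
  have step4 : ∑ v ∈ C, (nodeWeight G w v + nodeWeight G wr v)
      ≤ 2 * ∑ e ∈ G.edgeFinset, (w e + wr e) := by
    have : ∑ v ∈ C, (nodeWeight G w v + nodeWeight G wr v)
        = ∑ e ∈ G.edgeFinset, ((C.filter (fun v => v ∈ e)).card : ℝ) * (w e + wr e) := by
      rw [Finset.sum_add_distrib, hsum w, hsum wr, ← Finset.sum_add_distrib]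
      apply Finset.sum_congr rfl
      intro e _
      ring
    rw [this, Finset.mul_sum]
    apply Finset.sum_le_sum
    intro e he
    have h2 : ((C.filter (fun v => v ∈ e)).card : ℝ) ≤ 2 := by
      exact_mod_cast hcard2 e he
    have := add_nonneg (hw e he) (hwr e he)
    nlinarith
  have hfinal : ∑ e ∈ G.edgeFinset, w' e ≤ (C.card : ℝ) := le_trans step1 step2
  rw [div_mul_eq_mul_div, le_div_iff₀ hf]
  nlinarith
end

section
/- Let G = (V, E) be a finite simple graph, β ≥ 5 a real, f(β) := 1 − 3/β, and K an integer. Let ℓ : V → ℤ satisfy ℓ(v) ≥ K for all v, let w : E → ℝ≥0 be edge weights with node weights W_v, let E^r := {(u,v) ∈ E : ℓ(u) = ℓ(v) = K}, and let w^r : E → ℝ≥0 be residual edge weights with w^r(e) = 0 for every e ∉ E^r, with residual node weights W^r_v. Assume: (i) W_v ≥ f(β) for every node v with ℓ(v) > K; (a) W_v + W^r_v ≤ 1 for every node v; and (b) every edge (u,v) ∈ E^r has an endpoint x ∈ {u,v} with W_x + W^r_x ≥ 1 − 1/β. Then for every vertex cover C of G, the set V* := {v ∈ V : W_v + W^r_v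 ≥ f(β)} satisfies |V*| ≤ (2/f(β)) · |C|; that is, V* is a (2/f(β))-approximate minimum vertex cover of G. -/
open Finset

variable {V : Type*}

theorem stmt7 [Fintype V] [DecidableEq V] (G : SimpleGraph V) [DecidableRel G.Adj]
    (β : ℝ) (hβ : 5 ≤ β) (K : ℤ) (ℓ : V → ℤ) (hK : ∀ v : V, K ≤ ℓ v)
    (w wr : Sym2 V → ℝ)
    (hw : ∀ e ∈ G.edgeFinset, 0 ≤ w e) (hwr : ∀ e ∈ G.edgeFinset, 0 ≤ wr e)
    -- the residual weights vanish outside E^r = {(u,v) ∈ E : ℓ u = K ∧ ℓ v = K}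
    (hwr0 : ∀ u v : V, ¬ (G.Adj u v ∧ ℓ u = K ∧ ℓ v = K) → wr s(u, v) = 0)
    -- (i) every node at level above K has weight at least f(β) = 1 - 3/β
    (hi : ∀ v : V, K < ℓ v → 1 - 3 / β ≤ nodeWeight G w v)
    -- (a) W_v + W^r_v ≤ 1 for every node v
    (ha : ∀ v : V, nodeWeight G w v + nodeWeight G wr v ≤ 1)
    -- (b) every edge of E^r has an endpoint x with W_x + W^r_x ≥ 1 - 1/β
    (hb : ∀ u v : V, G.Adj u v → ℓ u = K → ℓ v = K →
      1 - 1 / β ≤ nodeWeight G w u + nodeWeight G wr u ∨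
      1 - 1 / β ≤ nodeWeight G w v + nodeWeight G wr v) :
    ∀ C : Set V, IsVertexCover G C →
      (({v : V | 1 - 3 / β ≤ nodeWeight G w v + nodeWeight G wr v} : Set V).ncard : ℝ) ≤
        (2 / (1 - 3 / β)) * (C.ncard : ℝ) := by
  intro C hC
  classical
  set f : ℝ := 1 - 3 / β with hf
  have hβ0 : (0:ℝ) < β := lt_of_lt_of_le (by norm_num) hβ
  have hfpos : 0 < f := by
    have h1 : 3 / β ≤ 3 / 5 := by
      apply div_le_div_of_nonneg_left (by norm_num) (by norm_num) hβ
    have : (0:ℝ) < 1 - 3 / 5 := by norm_num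
    simp only [hf]; linarith
  set W : Sym2 V → ℝ := fun e => w e + wr e with hWdef
  have hWnn : ∀ e ∈ G.edgeFinset, 0 ≤ W e := fun e he => add_nonneg (hw e he) (hwr e he)
  have hnodeW : ∀ v, nodeWeight G W v = nodeWeight G w v + nodeWeight G wr v := by
    intro v
    unfold nodeWeight
    rw [← Finset.sum_add_distrib]
    refine Finset.sum_congr rfl fun e _ => ?_
    split <;> simp [hWdef]
  have hnode1 : ∀ v, nodeWeight G W v ≤ 1 := fun v => (hnodeW v) ▸ ha v
  have hnodeWnn : ∀ v, 0 ≤ nodeWeight G W v := by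
    intro v
    refine Finset.sum_nonneg fun e he => ?_
    split
    · exact hWnn e he
    · exact le_refl 0
  -- double counting over a finset of vertices
  have hdc : ∀ S : Finset V, ∑ v ∈ S, nodeWeight G W v
      = ∑ e ∈ G.edgeFinset, ((S.filter (fun v => v ∈ e)).card : ℝ) * W e := by
    intro S
    unfold nodeWeight
    rw [Finset.sum_comm]
    refine Finset.sum_congr rfl fun e _ => ?_
    rw [← Finset.sum_filter, Finset.sum_const, nsmul_eq_mul]
  have hcard2 : ∀ e ∈ G.edgeFinset, ((univ.filter (fun v => v ∈ e)) : Finset V).card = 2 := by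
    intro e he
    induction e using Sym2.ind with
    | _ a b =>
      rw [SimpleGraph.mem_edgeFinset, SimpleGraph.mem_edgeSet] at he
      have hab : a ≠ b := he.ne
      have hset : (univ.filter (fun v => v ∈ s(a,b)) : Finset V) = {a, b} := by
        ext v; simp [Sym2.mem_iff]
      rw [hset, Finset.card_insert_of_notMem (by simp [hab]), Finset.card_singleton]
  -- total sum of node weights = 2 * total edge weight
  have htotal : ∑ v, nodeWeight G W v = 2 * ∑ e ∈ G.edgeFinset, W e := by
    rw [hdc univ, Finset.mul_sum]
    refine Finset.sum_congr rfl fun e he => ?_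
    rw [hcard2 e he]; norm_num
  -- cover finset
  have hCfin : C.Finite := Set.toFinite C
  set Cf : Finset V := hCfin.toFinset with hCf
  have hcover : ∑ e ∈ G.edgeFinset, W e ≤ ∑ v ∈ Cf, nodeWeight G W v := by
    rw [hdc Cf]
    refine Finset.sum_le_sum fun e he => ?_
    have hWe := hWnn e he
    have hone : 1 ≤ ((Cf.filter (fun v => v ∈ e)).card : ℝ) := by
      have : (Cf.filter (fun v => v ∈ e)).Nonempty := by
        revert he
        induction e using Sym2.ind with
        | _ a b =>
          intro he
          rw [SimpleGraph.mem_edgeFinset, SimpleGraph.mem_edgeSet] at he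
          rcases hC he with h | h
          · exact ⟨a, by simpa [hCf, Set.Finite.mem_toFinset] using h⟩
          · exact ⟨b, by simpa [hCf, Set.Finite.mem_toFinset] using h⟩
      have := Finset.card_pos.mpr this
      exact_mod_cast this
    calc W e = 1 * W e := by ring
    _ ≤ ((Cf.filter (fun v => v ∈ e)).card : ℝ) * W e := by
        exact mul_le_mul_of_nonneg_right hone hWe
  have hCbound : ∑ v ∈ Cf, nodeWeight G W v ≤ (Cf.card : ℝ) := by
    calc ∑ v ∈ Cf, nodeWeight G W v ≤ ∑ _v ∈ Cf, (1:ℝ) :=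
      Finset.sum_le_sum fun v _ => hnode1 v
    _ = (Cf.card : ℝ) := by simp
  -- the V* finset
  set Vf : Finset V := univ.filter (fun v => f ≤ nodeWeight G w v + nodeWeight G wr v) with hVf
  have hVstar : ({v : V | 1 - 3 / β ≤ nodeWeight G w v + nodeWeight G wr v} : Set V).ncard
      = Vf.card := by
    rw [Set.ncard_eq_toFinset_card', Set.toFinset_setOf]
  have hlow : f * (Vf.card : ℝ) ≤ ∑ v, nodeWeight G W v := by
    calc f * (Vf.card : ℝ) = ∑ _v ∈ Vf, f := by rw [Finset.sum_const, nsmul_eq_mul]; ring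
    _ ≤ ∑ v ∈ Vf, nodeWeight G W v := by
        refine Finset.sum_le_sum fun v hv => ?_
        rw [hnodeW v]
        exact (Finset.mem_filter.mp hv).2
    _ ≤ ∑ v, nodeWeight G W v :=
        Finset.sum_le_sum_of_subset_of_nonneg (Finset.subset_univ _)
          (fun v _ _ => hnodeWnn v)
  have hCn : (C.ncard : ℝ) = (Cf.card : ℝ) := by
    rw [Set.ncard_eq_toFinset_card C hCfin]
  have key : f * (Vf.card : ℝ) ≤ 2 * (Cf.card : ℝ) := by
    calc f * (Vf.card : ℝ) ≤ ∑ v, nodeWeight G W v := hlow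
    _ = 2 * ∑ e ∈ G.edgeFinset, W e := htotal
    _ ≤ 2 * ∑ v ∈ Cf, nodeWeight G W v := by linarith [hcover]
    _ ≤ 2 * (Cf.card : ℝ) := by linarith [hCbound]
  rw [hVstar, hCn]
  rw [div_mul_eq_mul_div, le_div_iff₀ hfpos]
  linarith [key]
end

section
/- Let G = (V, E) be a finite simple graph, let E^r ⊆ E be any subset of its edges, let β be a positive integer, and let W : V → ℝ satisfy 0 ≤ W_v < 1 for every node v. Then there exists a residual edge-weight function w^r : E → ℝ≥0 such that: w^r(e) = 0 for every e ∉ E^r; every value w^r(e) is an integer multiple of 1/β; (a) W_v + W^r_v ≤ 1 for every node v, where W^r_v := Σ_{e ∈ E, v ∈ e} w^r(e); and (b) every edge (u,v) ∈ E^r has an endpoint x ∈ {u,v} with W_x + W^r_x ≥ 1 − 1/β. -/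
open Finset

variable {V : Type*}

theorem stmt8 [Fintype V] [DecidableEq V] (G : SimpleGraph V) [DecidableRel G.Adj]
    (Er : Finset (Sym2 V)) (hEr : Er ⊆ G.edgeFinset)
    (β : ℕ) (hβ : 0 < β)
    (W : V → ℝ) (hW : ∀ v : V, 0 ≤ W v ∧ W v < 1) :
    ∃ wr : Sym2 V → ℝ,
      (∀ e : Sym2 V, 0 ≤ wr e) ∧
      (∀ e : Sym2 V, e ∉ Er → wr e = 0) ∧
      (∀ e : Sym2 V, ∃ t : ℕ, wr e = (t : ℝ) / (β : ℝ)) ∧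
      (∀ v : V, W v + nodeWeight G wr v ≤ 1) ∧
      (∀ u v : V, s(u, v) ∈ Er →
        1 - 1 / (β : ℝ) ≤ W u + nodeWeight G wr u ∨
        1 - 1 / (β : ℝ) ≤ W v + nodeWeight G wr v) := by
  classical
  have hb : (0:ℝ) < (β:ℝ) := by exact_mod_cast hβ
  -- capacities
  set c : V → ℕ := fun v => ⌊(β:ℝ) * (1 - W v)⌋₊ with hc
  -- degree of an integer weight function
  set D : (Sym2 V → ℕ) → V → ℕ :=
    fun t v => ∑ e ∈ G.edgeFinset, if v ∈ e then t e else 0 with hD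
  set Feas : (Sym2 V → ℕ) → Prop :=
    fun t => (∀ e ∉ Er, t e = 0) ∧ (∀ v, D t v ≤ c v) with hFeas
  set M : ℕ := ∑ v, c v with hM
  have hbound : ∀ t, Feas t → ∑ e ∈ Er, t e ≤ Er.card * M := by
    intro t ht
    have h1 : ∀ e ∈ Er, t e ≤ M := by
      intro e he
      induction e using Sym2.ind with
      | _ a b =>
        have hmem : s(a, b) ∈ G.edgeFinset := hEr he
        have h2 : t s(a, b) ≤ D t a := by
          have := Finset.single_le_sum
            (f := fun e' => if a ∈ e' then t e' else 0)
            (fun i _ => Nat.zero_le _) hmem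
          simpa [hD] using this
        have h3 : D t a ≤ c a := ht.2 a
        have h4 : c a ≤ M :=
          Finset.single_le_sum (fun i _ => Nat.zero_le _) (Finset.mem_univ a)
        omega
    calc ∑ e ∈ Er, t e ≤ Er.card • M := Finset.sum_le_card_nsmul _ _ _ h1
    _ = Er.card * M := by rw [smul_eq_mul]
  set P : ℕ → Prop := fun n => ∃ t, Feas t ∧ ∑ e ∈ Er, t e = n with hP
  set B : ℕ := Er.card * M with hB
  have hP0 : P 0 := by
    refine ⟨fun _ => 0, ⟨fun _ _ => rfl, fun v => by simp [hD]⟩, by simp⟩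
  have hPn : P (Nat.findGreatest P B) := Nat.findGreatest_spec (Nat.zero_le B) hP0
  obtain ⟨t, htF, htsum⟩ := hPn
  -- maximality: each residual edge has a saturated endpoint
  have hsat : ∀ u v : V, s(u, v) ∈ Er → D t u = c u ∨ D t v = c v := by
    intro u v huv
    by_contra hcon
    push_neg at hcon
    have hu : D t u < c u := lt_of_le_of_ne (htF.2 u) hcon.1
    have hv : D t v < c v := lt_of_le_of_ne (htF.2 v) hcon.2
    have he0 : s(u, v) ∈ G.edgeFinset := hEr huv
    set t' : Sym2 V → ℕ := fun e => t e + (if e = s(u, v) then 1 else 0) with ht'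
    have key : ∀ x, D t' x = D t x + (if x ∈ s(u, v) then 1 else 0) := by
      intro x
      simp only [hD, ht']
      have hsplit : ∀ e ∈ G.edgeFinset,
          (if x ∈ e then t e + (if e = s(u, v) then 1 else 0) else 0)
          = (if x ∈ e then t e else 0)
            + (if e = s(u, v) then (if x ∈ e then 1 else 0) else 0) := by
        intro e _
        split_ifs <;> simp_all
      rw [Finset.sum_congr rfl hsplit, Finset.sum_add_distrib,
        Finset.sum_ite_eq' G.edgeFinset s(u, v) (fun e => if x ∈ e then 1 else 0),
        if_pos he0]
    have hF' : Feas t' := by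
      constructor
      · intro e he
        have : e ≠ s(u, v) := fun h => he (h ▸ huv)
        simp [ht', this, htF.1 e he]
      · intro x
        rw [key x]
        by_cases hx : x ∈ s(u, v)
        · rw [Sym2.mem_iff] at hx
          rcases hx with rfl | rfl <;> simp_all <;> omega
        · simp [hx, htF.2 x]
    have hsum' : ∑ e ∈ Er, t' e = (∑ e ∈ Er, t e) + 1 := by
      simp only [ht']
      rw [Finset.sum_add_distrib,
        Finset.sum_ite_eq' Er s(u, v) (fun _ => 1), if_pos huv]
    have hle : Nat.findGreatest P B + 1 ≤ B := by
      have := hbound t' hF'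
      rw [hsum', htsum] at this
      exact this
    exact Nat.findGreatest_is_greatest (Nat.lt_succ_self _) hle
      ⟨t', hF', by rw [hsum', htsum]⟩
  -- the residual weights
  refine ⟨fun e => (t e : ℝ) / (β : ℝ), ?_, ?_, ?_, ?_, ?_⟩
  · intro e; positivity
  · intro e he; simp [htF.1 e he]
  · intro e; exact ⟨t e, rfl⟩
  · -- need nodeWeight identity first
    intro v
    have hnw : nodeWeight G (fun e => (t e : ℝ) / (β : ℝ)) v = (D t v : ℝ) / β := by
      simp only [nodeWeight, hD, Nat.cast_sum, apply_ite (fun r : ℝ => r / (β:ℝ)),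
        zero_div, Finset.sum_div, apply_ite (fun n : ℕ => (n : ℝ)), Nat.cast_zero]
    rw [hnw]
    have h1 : (D t v : ℝ) ≤ (c v : ℝ) := by exact_mod_cast htF.2 v
    have h2 : (c v : ℝ) ≤ (β:ℝ) * (1 - W v) := by
      apply Nat.floor_le
      have := (hW v).2
      nlinarith
    have h3 : (D t v : ℝ) / β ≤ 1 - W v := by
      rw [div_le_iff₀ hb]
      nlinarith
    linarith
  · intro u v huv
    have hnw : ∀ x, nodeWeight G (fun e => (t e : ℝ) / (β : ℝ)) x = (D t x : ℝ) / β := by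
      intro x
      simp only [nodeWeight, hD, Nat.cast_sum, apply_ite (fun r : ℝ => r / (β:ℝ)),
        zero_div, Finset.sum_div, apply_ite (fun n : ℕ => (n : ℝ)), Nat.cast_zero]
    have main : ∀ x : V, D t x = c x → 1 - 1 / (β:ℝ) ≤ W x + (D t x : ℝ) / β := by
      intro x hx
      have h1 : (β:ℝ) * (1 - W x) - 1 < (c x : ℝ) := Nat.sub_one_lt_floor _
      have h2 : ((β:ℝ) * (1 - W x) - 1) / β ≤ (c x : ℝ) / β := by
        gcongr
      have h3 : ((β:ℝ) * (1 - W x) - 1) / β = 1 - W x - 1 / β := by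
        field_simp
      rw [hx]
      rw [h3] at h2
      linarith
    rcases hsat u v huv with h | h
    · left; rw [hnw u]; exact main u h
    · right; rw [hnw v]; exact main v h
end

section
/- Fix a real ε with 0 < ε < 1 and set β := 3(2 + ε)/ε, f(β) := 1 − 3/β, and K an integer. Let G = (V, E) be a finite simple graph, let ℓ : V → ℤ satisfy ℓ(v) ≥ K for all v, let w : E → ℝ≥0 be edge weights with node weights W_v, let E^r := {(u,v) ∈ E : ℓ(u) = ℓ(v) = K}, and let w^r : E → ℝ≥0 be residual edge weights with w^r(e) = 0 for every e ∉ E^r, with residual node weights W^r_v. Assume: (i) W_v ≥ f(β) for every node v with ℓ(v) > K; (a) W_v + W^r_v ≤ 1 for every node v; and (b) every edge (u,v) ∈ E^r has an endpoint x ∈ {u,v} with W_x + W^r_x ≥ 1 − 1/β. Then the edge weights e ↦ w(e) + w^r(e) form a fractional matching of G of size at least 1/(2 + ε) times the size of every fractional matching of G, and the set V* := {v ∈ V : W_v + W^r_v ≥ f(β)} is a vertex cover of G with |V*| ≤ (2 + ε) · |C| for every vertex cover C of G. -/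
open Finset

variable {V : Type*}

section Aux

variable [Fintype V] [DecidableEq V] (G : SimpleGraph V) [DecidableRel G.Adj]

lemma aux_sum_mem (e : Sym2 V) (he : e ∈ G.edgeFinset) (c : ℝ) :
    ∑ v : V, (if v ∈ e then c else 0) = 2 * c := by
  induction e using Sym2.ind with
  | _ a b =>
    have hab : a ≠ b := ((G.mem_edgeSet).mp (SimpleGraph.mem_edgeFinset.mp he)).ne
    rw [← Finset.sum_filter]
    have h : Finset.univ.filter (fun v => v ∈ s(a,b)) = {a, b} := by
      ext v; simp [Sym2.mem_iff]
    rw [h, Finset.sum_const, Finset.card_insert_of_notMem (by simp [hab]),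
      Finset.card_singleton, nsmul_eq_mul]
    norm_num

lemma nodeWeight_nonneg {w : Sym2 V → ℝ} (hw : ∀ e ∈ G.edgeFinset, 0 ≤ w e) (v : V) :
    0 ≤ nodeWeight G w v :=
  Finset.sum_nonneg fun e he => by
    split_ifs
    · exact hw e he
    · exact le_refl 0

lemma nodeWeight_add (w wr : Sym2 V → ℝ) (v : V) :
    nodeWeight G (fun e => w e + wr e) v = nodeWeight G w v + nodeWeight G wr v := by
  unfold nodeWeight
  rw [← Finset.sum_add_distrib]
  exact Finset.sum_congr rfl fun e _ => by split_ifs <;> simp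

lemma sum_nodeWeight (w : Sym2 V → ℝ) :
    ∑ v : V, nodeWeight G w v = 2 * ∑ e ∈ G.edgeFinset, w e := by
  unfold nodeWeight
  rw [Finset.sum_comm, Finset.mul_sum]
  exact Finset.sum_congr rfl fun e he => aux_sum_mem G e he (w e)

lemma sum_le_cover (s : Finset V) (hcov : ∀ u v : V, G.Adj u v → u ∈ s ∨ v ∈ s)
    {w : Sym2 V → ℝ} (hw : ∀ e ∈ G.edgeFinset, 0 ≤ w e) :
    ∑ e ∈ G.edgeFinset, w e ≤ ∑ v ∈ s, nodeWeight G w v := by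
  unfold nodeWeight
  rw [Finset.sum_comm]
  refine Finset.sum_le_sum fun e he => ?_
  induction e using Sym2.ind with
  | _ a b =>
    have hadj : G.Adj a b := (G.mem_edgeSet).mp (SimpleGraph.mem_edgeFinset.mp he)
    rw [← Finset.sum_filter, Finset.sum_const, nsmul_eq_mul]
    have hcard : (1 : ℝ) ≤ ((s.filter (fun v => v ∈ s(a,b))).card : ℝ) := by
      have hne : (s.filter (fun v => v ∈ s(a,b))).Nonempty := by
        rcases hcov a b hadj with h | h
        · exact ⟨a, Finset.mem_filter.mpr ⟨h, by simp⟩⟩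
        · exact ⟨b, Finset.mem_filter.mpr ⟨h, by simp⟩⟩
      exact_mod_cast Finset.card_pos.mpr hne
    calc w s(a,b) = 1 * w s(a,b) := (one_mul _).symm
      _ ≤ _ := mul_le_mul_of_nonneg_right hcard (hw _ he)

end Aux

theorem stmt11 [Fintype V] [DecidableEq V] (G : SimpleGraph V) [DecidableRel G.Adj]
    (ε β : ℝ) (hε0 : 0 < ε) (hε1 : ε < 1) (hβ : β = 3 * (2 + ε) / ε)
    (K : ℤ) (ℓ : V → ℤ) (hK : ∀ v : V, K ≤ ℓ v)
    (w wr : Sym2 V → ℝ)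
    (hw : ∀ e ∈ G.edgeFinset, 0 ≤ w e) (hwr : ∀ e ∈ G.edgeFinset, 0 ≤ wr e)
    -- the residual weights vanish outside E^r = {(u,v) ∈ E : ℓ u = K ∧ ℓ v = K}
    (hwr0 : ∀ u v : V, ¬ (G.Adj u v ∧ ℓ u = K ∧ ℓ v = K) → wr s(u, v) = 0)
    -- (i) every node at level above K has weight at least f(β) = 1 - 3/β
    (hi : ∀ v : V, K < ℓ v → 1 - 3 / β ≤ nodeWeight G w v)
    -- (a) W_v + W^r_v ≤ 1 for every node v
    (ha : ∀ v : V, nodeWeight G w v + nodeWeight G wr v ≤ 1)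
    -- (b) every edge of E^r has an endpoint x with W_x + W^r_x ≥ 1 - 1/β
    (hb : ∀ u v : V, G.Adj u v → ℓ u = K → ℓ v = K →
      1 - 1 / β ≤ nodeWeight G w u + nodeWeight G wr u ∨
      1 - 1 / β ≤ nodeWeight G w v + nodeWeight G wr v) :
    (IsFractionalMatching G (fun e => w e + wr e) ∧
      ∀ w' : Sym2 V → ℝ, IsFractionalMatching G w' →
        (1 / (2 + ε)) * ∑ e ∈ G.edgeFinset, w' e ≤
          ∑ e ∈ G.edgeFinset, (w e + wr e)) ∧
    (IsVertexCover G {v : V | 1 - 3 / β ≤ nodeWeight G w v + nodeWeight G wr v} ∧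
      ∀ C : Set V, IsVertexCover G C →
        (({v : V | 1 - 3 / β ≤ nodeWeight G w v + nodeWeight G wr v} : Set V).ncard : ℝ) ≤
          (2 + ε) * (C.ncard : ℝ)) := by
  classical
  have h2ε : (0 : ℝ) < 2 + ε := by linarith
  have hβpos : (0 : ℝ) < β := by rw [hβ]; positivity
  have hf : 1 - 3 / β = 2 / (2 + ε) := by
    rw [hβ]; field_simp; ring
  have hfpos : (0 : ℝ) < 1 - 3 / β := by rw [hf]; positivity
  -- the combined weights
  set T : ℝ := ∑ e ∈ G.edgeFinset, (w e + wr e) with hT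
  have hwwr : ∀ e ∈ G.edgeFinset, 0 ≤ w e + wr e := fun e he =>
    add_nonneg (hw e he) (hwr e he)
  -- V* as a Finset
  set Vs : Finset V := Finset.univ.filter
    (fun v => 1 - 3 / β ≤ nodeWeight G w v + nodeWeight G wr v) with hVs
  have hVsncard : ({v : V | 1 - 3 / β ≤ nodeWeight G w v + nodeWeight G wr v} : Set V).ncard
      = Vs.card := by
    rw [Set.ncard_eq_toFinset_card']
    congr 1
    ext v
    simp [hVs]
  -- V* is a cover (as in the statement)
  have hcover : ∀ u v : V, G.Adj u v → u ∈ Vs ∨ v ∈ Vs := by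
    intro u v huv
    have hmem : ∀ x : V, 1 - 3 / β ≤ nodeWeight G w x + nodeWeight G wr x → x ∈ Vs := by
      intro x hx; exact Finset.mem_filter.mpr ⟨Finset.mem_univ x, hx⟩
    rcases lt_or_eq_of_le (hK u) with hu | hu
    · left
      exact hmem u (le_trans (hi u hu)
        (le_add_of_nonneg_right (nodeWeight_nonneg G hwr u)))
    · rcases lt_or_eq_of_le (hK v) with hv | hv
      · right
        exact hmem v (le_trans (hi v hv)
          (le_add_of_nonneg_right (nodeWeight_nonneg G hwr v)))
      · have h13 : 1 - 3 / β ≤ 1 - 1 / β := by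
          have h2b : (0:ℝ) ≤ 2 / β := by positivity
          have h3b : 3 / β = 1 / β + 2 / β := by ring
          linarith
        rcases hb u v huv hu.symm hv.symm with h | h
        · exact Or.inl (hmem u (le_trans h13 h))
        · exact Or.inr (hmem v (le_trans h13 h))
  -- sum over Vs of combined node weights bounds f * |Vs| below and 2T above
  have hfVs : (1 - 3 / β) * (Vs.card : ℝ) ≤ 2 * T := by
    have h1 : (1 - 3 / β) * (Vs.card : ℝ)
        ≤ ∑ v ∈ Vs, (nodeWeight G w v + nodeWeight G wr v) := by
      have hle := Finset.card_nsmul_le_sum Vs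
        (fun v => nodeWeight G w v + nodeWeight G wr v) (1 - 3 / β)
        (fun v hv => (Finset.mem_filter.mp hv).2)
      rw [nsmul_eq_mul] at hle
      linarith [hle]
    have h2 : ∑ v ∈ Vs, (nodeWeight G w v + nodeWeight G wr v)
        ≤ ∑ v : V, (nodeWeight G w v + nodeWeight G wr v) := by
      refine Finset.sum_le_sum_of_subset_of_nonneg (Finset.subset_univ _) fun v _ _ =>
        add_nonneg (nodeWeight_nonneg G hw v) (nodeWeight_nonneg G hwr v)
    have h3 : ∑ v : V, (nodeWeight G w v + nodeWeight G wr v) = 2 * T := by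
      rw [Finset.sum_add_distrib, sum_nodeWeight, sum_nodeWeight, hT,
        Finset.sum_add_distrib]
      ring
    linarith
  refine ⟨⟨⟨hwwr, fun v => ?_⟩, fun w' hw' => ?_⟩, fun u v huv => ?_, fun C hC => ?_⟩
  · rw [nodeWeight_add]; exact ha v
  · -- approximation for fractional matchings
    have hs1 : ∑ e ∈ G.edgeFinset, w' e ≤ ∑ v ∈ Vs, nodeWeight G w' v :=
      sum_le_cover G Vs hcover hw'.1
    have hs2 : ∑ v ∈ Vs, nodeWeight G w' v ≤ (Vs.card : ℝ) := by
      calc ∑ v ∈ Vs, nodeWeight G w' v ≤ ∑ v ∈ Vs, (1 : ℝ) :=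
            Finset.sum_le_sum fun v _ => hw'.2 v
        _ = (Vs.card : ℝ) := by simp
    have key : (1 - 3 / β) * ∑ e ∈ G.edgeFinset, w' e ≤ 2 * T := by
      calc (1 - 3 / β) * ∑ e ∈ G.edgeFinset, w' e
          ≤ (1 - 3 / β) * (Vs.card : ℝ) :=
            mul_le_mul_of_nonneg_left (le_trans hs1 hs2) hfpos.le
        _ ≤ 2 * T := hfVs
    rw [hf] at key
    rw [div_mul_eq_mul_div, div_le_iff₀ h2ε] at key ⊢
    · linarith
  · -- V* is a vertex cover
    rcases hcover u v huv with h | h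
    · exact Or.inl ((Finset.mem_filter.mp h).2)
    · exact Or.inr ((Finset.mem_filter.mp h).2)
  · -- size bound against any vertex cover C
    rw [hVsncard]
    have hCcard : (C.ncard : ℝ) = (C.toFinset.card : ℝ) := by
      rw [Set.ncard_eq_toFinset_card']
    have hc1 : T ≤ ∑ v ∈ C.toFinset, (nodeWeight G w v + nodeWeight G wr v) := by
      have := sum_le_cover G C.toFinset
        (fun u v huv => by
          rcases hC huv with h | h
          · exact Or.inl (Set.mem_toFinset.mpr h)
          · exact Or.inr (Set.mem_toFinset.mpr h)) hwwr
      calc T ≤ ∑ v ∈ C.toFinset, nodeWeight G (fun e => w e + wr e) v := this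
        _ = _ := Finset.sum_congr rfl fun v _ => nodeWeight_add G w wr v
    have hc2 : ∑ v ∈ C.toFinset, (nodeWeight G w v + nodeWeight G wr v)
        ≤ (C.toFinset.card : ℝ) := by
      calc ∑ v ∈ C.toFinset, (nodeWeight G w v + nodeWeight G wr v)
          ≤ ∑ v ∈ C.toFinset, (1 : ℝ) := Finset.sum_le_sum fun v _ => ha v
        _ = _ := by simp
    -- f * |Vs| ≤ 2T ≤ 2|C|, and (2+ε) = 2/f
    have : (1 - 3 / β) * (Vs.card : ℝ) ≤ 2 * (C.toFinset.card : ℝ) := by linarith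
    rw [hf] at this
    rw [hCcard]
    rw [div_mul_eq_mul_div, div_le_iff₀ h2ε] at this
    linarith
end
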